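/- arXiv:2507.17631 — 2 statements merged into one kernel-verified Lean document; each statement's English description precedes it below -/
import Mathlib

section
/- For every n ≥ 0, the sequence 0 → M_tor^{(n)}/E → M^{(n)}/E → M_tf^{(n)}/E → 0 is exact, where N^{(n)} = 𝔖 ⊗_{𝔖,φ^n} N and N/E = N/EN. Moreover, passing to p-power torsion submodules, the sequence 0 → M_tor^{(n)}/E → (M^{(n)}/E)[p^∞] → (M_tf^{(n)}/E)[p^∞] → 0 is also exact. -/
noncomputable section

variable {R : Type*} [CommRing R]

/-- A copy of `R` regarded as a module over `R` through the ring endomorphism `ψ`. -/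
def TwBase (ψ : R →+* R) : Type _ := R

instance (ψ : R →+* R) : CommRing (TwBase ψ) := inferInstanceAs (CommRing R)
instance (ψ : R →+* R) : Module R (TwBase ψ) := Module.compHom R ψ

/-- The base change (Frobenius twist) `ψ^*M = R ⊗_{R,ψ} M` of a module `M` along `ψ`. -/
def Twist (ψ : R →+* R) (M : Type*) [AddCommGroup M] [Module R M] : Type _ :=
  TensorProduct R (TwBase ψ) M

instance (ψ : R →+* R) (M : Type*) [AddCommGroup M] [Module R M] :
    AddCommGroup (Twist ψ M) :=
  inferInstanceAs (AddCommGroup (TensorProduct R (TwBase ψ) M))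

instance (ψ : R →+* R) (M : Type*) [AddCommGroup M] [Module R M] : Module R (Twist ψ M) :=
  inferInstanceAs (Module R (TensorProduct R (TwBase ψ) M))

/-- Multiplication by `a` on the left factor of the twist, as an `R`-linear map on `TwBase ψ`. -/
def twMulBase (ψ : R →+* R) (a : R) : TwBase ψ →ₗ[R] TwBase ψ where
  toFun x := Mul.mul a x
  map_add' x y := mul_add a x y
  map_smul' r x := mul_left_comm a (ψ r) x

/-- "Target" multiplication by `a ∈ R` on the twist `ψ^*M`; this realises the natural
module structure of the base change over the target copy of `R`. -/
def twistSMul (ψ : R →+* R) (a : R) (M : Type*) [AddCommGroup M] [Module R M] :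
    Twist ψ M →ₗ[R] Twist ψ M :=
  TensorProduct.map (twMulBase ψ a) LinearMap.id

/-- Functoriality of the twist: the map `ψ^*f : ψ^*M → ψ^*N` induced by `f : M → N`. -/
def twistMap (ψ : R →+* R) {M N : Type*} [AddCommGroup M] [Module R M]
    [AddCommGroup N] [Module R N] (f : M →ₗ[R] N) : Twist ψ M →ₗ[R] Twist ψ N :=
  LinearMap.lTensor (TwBase ψ) f

/-- The `n`-th iterate of a ring endomorphism, as a ring homomorphism. -/
def iterateHom (σ : R →+* R) : ℕ → R →+* R
  | 0 => RingHom.id R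
  | n + 1 => σ.comp (iterateHom σ n)

/-- The submodule of elements killed by a power of `r`. -/
def pPrim (r : R) (M : Type*) [AddCommGroup M] [Module R M] : Submodule R M where
  carrier := {x | ∃ n : ℕ, r ^ n • x = 0}
  zero_mem' := ⟨0, smul_zero _⟩
  add_mem' := by
    rintro a b ⟨na, ha⟩ ⟨nb, hb⟩
    refine ⟨na + nb, ?_⟩
    have h1 : r ^ (na + nb) • a = 0 := by
      rw [pow_add, mul_comm, mul_smul, ha, smul_zero]
    have h2 : r ^ (na + nb) • b = 0 := by
      rw [pow_add, mul_smul, hb, smul_zero]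
    rw [smul_add, h1, h2, add_zero]
  smul_mem' := by
    rintro c x ⟨n, hn⟩
    exact ⟨n, by rw [smul_comm, hn, smul_zero]⟩

end

/-! ### Auxiliary lemmas -/

noncomputable section Aux

variable {R : Type*} [CommRing R]

lemma TwBase.smul_def' (ψ : R →+* R) (r : R) (x : TwBase ψ) :
    r • x = (show TwBase ψ from ψ r * (show R from x)) := rfl

lemma mem_pPrim {r : R} {M : Type*} [AddCommGroup M] [Module R M] {x : M} (n : ℕ)
    (h : r ^ n • x = 0) : x ∈ pPrim r M := ⟨n, h⟩

lemma twist_comm (ψ : R →+* R) (a : R) {M N : Type*} [AddCommGroup M] [Module R M]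
    [AddCommGroup N] [Module R N] (f : M →ₗ[R] N) :
    (twistMap ψ f).comp (twistSMul ψ a M) = (twistSMul ψ a N).comp (twistMap ψ f) := by
  refine TensorProduct.ext' fun x m => ?_
  rfl

lemma twist_kill (ψ : R →+* R) {M : Type*} [AddCommGroup M] [Module R M] (s : R)
    (h : ∀ m : M, s • m = 0) (t : Twist ψ M) : s • t = 0 := by
  suffices H : ∀ t : TensorProduct R (TwBase ψ) M, s • t = 0 from H t
  intro t
  induction t using TensorProduct.induction_on with
  | zero => exact smul_zero _
  | tmul x m => rw [← TensorProduct.tmul_smul, h, TensorProduct.tmul_zero]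
  | add a b ha hb => rw [smul_add, ha, hb, add_zero]

section Basis
variable {A : Type*} [CommRing A] (ψ : PowerSeries A →+* PowerSeries A)
  (τ : A →+* A) (q : ℕ) (hq : 0 < q)
  (hψ : ∀ (f : PowerSeries A) (m : ℕ),
    PowerSeries.coeff m (ψ f) = if q ∣ m then τ (PowerSeries.coeff (m / q) f) else 0)

open PowerSeries

def twToFun : (Fin q → PowerSeries A) →ₗ[PowerSeries A] TwBase ψ where
  toFun f := (∑ i : Fin q, (X : PowerSeries A) ^ (i : ℕ) * ψ (f i) : PowerSeries A)
  map_add' f g := by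
    show (∑ i : Fin q, _) = ((∑ i : Fin q, _) + (∑ i : Fin q, _) : PowerSeries A)
    rw [← Finset.sum_add_distrib]
    refine Finset.sum_congr rfl fun i _ => ?_
    simp [Pi.add_apply, map_add, mul_add]
  map_smul' r f := by
    show (∑ i : Fin q, _) = (ψ r * ∑ i : Fin q, _ : PowerSeries A)
    rw [Finset.mul_sum]
    refine Finset.sum_congr rfl fun i _ => ?_
    show (X : PowerSeries A) ^ (i : ℕ) * ψ (r * f i)
        = ψ r * ((X : PowerSeries A) ^ (i : ℕ) * ψ (f i))
    rw [map_mul]; ring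

include hq hψ in
lemma twToFun_coeff (f : Fin q → PowerSeries A) (m : ℕ) :
    PowerSeries.coeff m (twToFun ψ q f : PowerSeries A)
      = τ (PowerSeries.coeff (m / q) (f ⟨m % q, Nat.mod_lt _ hq⟩)) := by
  show PowerSeries.coeff m (∑ i : Fin q, (X : PowerSeries A) ^ (i : ℕ) * ψ (f i)) = _
  rw [map_sum]
  rw [Finset.sum_eq_single (⟨m % q, Nat.mod_lt _ hq⟩ : Fin q)]
  · have hval : ((⟨m % q, Nat.mod_lt _ hq⟩ : Fin q) : ℕ) = m % q := rfl
    rw [coeff_X_pow_mul', hval, if_pos (Nat.mod_le m q), hψ,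
      if_pos ⟨m / q, by have := Nat.div_add_mod m q; omega⟩]
    congr 2
    rw [show m - m % q = q * (m / q) from by have := Nat.div_add_mod m q; omega,
      Nat.mul_div_cancel_left _ hq]
  · intro i _ hi
    rw [coeff_X_pow_mul']
    split_ifs with h
    · have hnd : ¬ q ∣ m - (i : ℕ) := by
        rintro ⟨t, ht⟩
        apply hi
        have hm : m = q * t + (i : ℕ) := by omega
        refine Fin.ext ?_
        show (i : ℕ) = m % q
        rw [hm, Nat.mul_add_mod, Nat.mod_eq_of_lt i.isLt]
      rw [hψ, if_neg hnd]
    · rfl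
  · intro h; exact absurd (Finset.mem_univ _) h

include hq hψ in
lemma twToFun_bijective (hτ : Function.Bijective τ) :
    Function.Bijective (twToFun ψ q) := by
  constructor
  · rw [injective_iff_map_eq_zero]
    intro f hf
    funext i
    refine PowerSeries.ext fun j => ?_
    have h0 : PowerSeries.coeff ((i : ℕ) + q * j) (twToFun ψ q f : PowerSeries A) = 0 := by
      rw [hf]; exact map_zero _
    rw [twToFun_coeff ψ τ q hq hψ] at h0
    have e1 : ((i : ℕ) + q * j) % q = (i : ℕ) := by
      rw [Nat.add_mul_mod_self_left, Nat.mod_eq_of_lt i.isLt]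
    have e2 : ((i : ℕ) + q * j) / q = j := by
      rw [Nat.add_mul_div_left _ _ hq, Nat.div_eq_of_lt i.isLt, zero_add]
    have e3 : (⟨((i : ℕ) + q * j) % q, Nat.mod_lt _ hq⟩ : Fin q) = i := Fin.ext e1
    rw [e3, e2] at h0
    have := hτ.injective (h0.trans (map_zero τ).symm)
    simpa using this
  · intro x
    refine ⟨fun i => PowerSeries.mk fun j =>
      (Equiv.ofBijective τ hτ).symm
        (PowerSeries.coeff ((i : ℕ) + q * j) (show PowerSeries A from x)), ?_⟩
    show (twToFun ψ q _ : PowerSeries A) = (show PowerSeries A from x)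
    refine PowerSeries.ext fun m => ?_
    rw [twToFun_coeff ψ τ q hq hψ, PowerSeries.coeff_mk]
    have e4 : ((⟨m % q, Nat.mod_lt _ hq⟩ : Fin q) : ℕ) + q * (m / q) = m := Nat.mod_add_div m q
    rw [e4]
    exact (Equiv.ofBijective τ hτ).apply_symm_apply _

include hq hψ in
lemma twBase_flat (hτ : Function.Bijective τ) :
    Module.Flat (PowerSeries A) (TwBase ψ) :=
  Module.Flat.of_linearEquiv
    (LinearEquiv.ofBijective _ (twToFun_bijective ψ τ q hq hψ hτ)).symm

end Basis

lemma iterateHom_bijective {σ : R →+* R} (h : Function.Bijective σ) (n : ℕ) :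
    Function.Bijective (iterateHom σ n) := by
  induction n with
  | zero => exact Function.bijective_id
  | succ n ih => exact h.comp ih

end Aux

noncomputable section Aux2

lemma iterateHom_coeff {p : ℕ} [Fact p.Prime] {k : Type*} [CommRing k]
    (σ : PowerSeries (WittVector p k) →+* PowerSeries (WittVector p k))
    (hσ : ∀ (f : PowerSeries (WittVector p k)) (m : ℕ),
      PowerSeries.coeff m (σ f) =
        if p ∣ m then WittVector.frobenius (PowerSeries.coeff (m / p) f) else 0)
    (n : ℕ) (f : PowerSeries (WittVector p k)) (m : ℕ) :
    PowerSeries.coeff m (iterateHom σ n f)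
      = if p ^ n ∣ m then
          iterateHom WittVector.frobenius n (PowerSeries.coeff (m / p ^ n) f) else 0 := by
  induction n generalizing m with
  | zero => simp [iterateHom]
  | succ n ih =>
    show PowerSeries.coeff m (σ (iterateHom σ n f)) = _
    rw [hσ]
    by_cases hp : p ∣ m
    · rw [if_pos hp, ih]
      have hdd : p ^ n ∣ m / p ↔ p ^ (n + 1) ∣ m := by
        rw [Nat.dvd_div_iff_mul_dvd hp, ← pow_succ']
      by_cases hn : p ^ n ∣ m / p
      · rw [if_pos hn, if_pos (hdd.mp hn),
          show m / p / p ^ n = m / p ^ (n + 1) from by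
            rw [Nat.div_div_eq_div_mul, ← pow_succ']]
        rfl
      · rw [if_neg hn, if_neg (fun h => hn (hdd.mpr h)), map_zero]
    · rw [if_neg hp,
        if_neg (fun h => hp (dvd_trans (dvd_pow_self p (Nat.succ_ne_zero n)) h))]

end Aux2

noncomputable section InjAux

lemma twistSMul_injective_of_noZeroSMulDivisors {R : Type*} [CommRing R] [IsDomain R]
    (ψ : R →+* R) (E : R) (hE0 : E ≠ 0) (hflat : Module.Flat R (TwBase ψ))
    (Q : Type*) [AddCommGroup Q] [Module R Q] [NoZeroSMulDivisors R Q] :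
    Function.Injective (twistSMul ψ E Q) := by
  haveI := hflat
  set ι := LocalizedModule.mkLinearMap (nonZeroDivisors R) Q with hι
  have hmulinj : Function.Injective (twMulBase ψ E) := by
    intro x y hxy
    have hxy' : E * (show R from x) = E * (show R from y) := hxy
    have h := mul_left_cancel₀ hE0 hxy'
    exact h
  have hιinj : Function.Injective ι := by
    rw [injective_iff_map_eq_zero]
    intro x hx0
    obtain ⟨s, hs⟩ := (IsLocalizedModule.eq_zero_iff (nonZeroDivisors R) ι).mp hx0
    rw [Submonoid.smul_def] at hs
    rcases smul_eq_zero.mp hs with h | h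
    · exact absurd h (nonZeroDivisors.ne_zero s.2)
    · exact h
  haveI : Module.Flat R (LocalizedModule (nonZeroDivisors R) Q) :=
    Module.Flat.trans R (Localization (nonZeroDivisors R)) _
  have hV : Function.Injective (twistSMul ψ E (LocalizedModule (nonZeroDivisors R) Q)) :=
    Module.Flat.rTensor_preserves_injective_linearMap (twMulBase ψ E) hmulinj
  have hTι : Function.Injective (twistMap ψ ι) :=
    Module.Flat.lTensor_preserves_injective_linearMap ι hιinj
  intro x y hxy
  apply hTι
  apply hV
  have h1 := LinearMap.congr_fun (twist_comm ψ E ι) x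
  have h2 := LinearMap.congr_fun (twist_comm ψ E ι) y
  rw [LinearMap.comp_apply, LinearMap.comp_apply] at h1 h2
  rw [← h1, ← h2]
  exact congrArg _ hxy

end InjAux

noncomputable section Chase

theorem twist_chase {R : Type*} [CommRing R] (ψ : R →+* R) (E r : R)
    (M : Type*) [AddCommGroup M] [Module R M] (Mtor : Submodule R M)
    (hflat : Module.Flat R (TwBase ψ))
    (hinj : Function.Injective (twistSMul ψ E (M ⧸ Mtor)))
    (N : ℕ) (hN : ∀ x ∈ Mtor, r ^ N • x = 0) :
    ∃ (g1 : (Twist ψ Mtor ⧸ LinearMap.range (twistSMul ψ E Mtor)) →ₗ[R]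
        (Twist ψ M ⧸ LinearMap.range (twistSMul ψ E M)))
      (g2 : (Twist ψ M ⧸ LinearMap.range (twistSMul ψ E M)) →ₗ[R]
        (Twist ψ (M ⧸ Mtor) ⧸ LinearMap.range (twistSMul ψ E (M ⧸ Mtor)))),
      g1.comp (LinearMap.range (twistSMul ψ E Mtor)).mkQ
          = (LinearMap.range (twistSMul ψ E M)).mkQ.comp (twistMap ψ Mtor.subtype) ∧
      g2.comp (LinearMap.range (twistSMul ψ E M)).mkQ
          = (LinearMap.range (twistSMul ψ E (M ⧸ Mtor))).mkQ.comp (twistMap ψ Mtor.mkQ) ∧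
      Function.Injective g1 ∧ Function.Exact g1 g2 ∧ Function.Surjective g2 ∧
      ∃ (t1 : (Twist ψ Mtor ⧸ LinearMap.range (twistSMul ψ E Mtor)) →ₗ[R]
            pPrim r (Twist ψ M ⧸ LinearMap.range (twistSMul ψ E M)))
        (t2 : pPrim r (Twist ψ M ⧸ LinearMap.range (twistSMul ψ E M)) →ₗ[R]
            pPrim r (Twist ψ (M ⧸ Mtor) ⧸ LinearMap.range (twistSMul ψ E (M ⧸ Mtor)))),
        (pPrim r _).subtype.comp t1 = g1 ∧
        (pPrim r _).subtype.comp t2 = g2.comp (pPrim r _).subtype ∧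
        Function.Injective t1 ∧ Function.Exact t1 t2 ∧ Function.Surjective t2 := by
  haveI := hflat
  set i : Twist ψ Mtor →ₗ[R] Twist ψ M := twistMap ψ Mtor.subtype with hidef
  set π : Twist ψ M →ₗ[R] Twist ψ (M ⧸ Mtor) := twistMap ψ Mtor.mkQ with hπdef
  have hi : Function.Injective i :=
    Module.Flat.lTensor_preserves_injective_linearMap _ (Submodule.injective_subtype Mtor)
  have hπ : Function.Surjective π :=
    LinearMap.lTensor_surjective _ (Submodule.mkQ_surjective Mtor)
  have hex : Function.Exact i π :=
    lTensor_exact (TwBase ψ) (LinearMap.exact_subtype_mkQ Mtor) (Submodule.mkQ_surjective Mtor)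
  have hcomm1 := twist_comm ψ E Mtor.subtype
  have hcomm2 := twist_comm ψ E Mtor.mkQ
  set EA := twistSMul ψ E Mtor
  set EB := twistSMul ψ E M
  set EC := twistSMul ψ E (M ⧸ Mtor)
  set K1 := LinearMap.range EA with hK1
  set K2 := LinearMap.range EB with hK2
  set K3 := LinearMap.range EC with hK3
  have hc1 : ∀ a, i (EA a) = EB (i a) := fun a => LinearMap.congr_fun hcomm1 a
  have hc2 : ∀ b, π (EB b) = EC (π b) := fun b => LinearMap.congr_fun hcomm2 b
  have h1 : K1 ≤ LinearMap.ker (K2.mkQ.comp i) := by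
    rintro _ ⟨y, rfl⟩
    simp only [LinearMap.mem_ker, LinearMap.comp_apply, hc1]
    rw [Submodule.mkQ_apply, Submodule.Quotient.mk_eq_zero]
    exact ⟨i y, rfl⟩
  have h2 : K2 ≤ LinearMap.ker (K3.mkQ.comp π) := by
    rintro _ ⟨y, rfl⟩
    simp only [LinearMap.mem_ker, LinearMap.comp_apply, hc2]
    rw [Submodule.mkQ_apply, Submodule.Quotient.mk_eq_zero]
    exact ⟨π y, rfl⟩
  set g1 := K1.liftQ (K2.mkQ.comp i) h1 with hg1def
  set g2 := K2.liftQ (K3.mkQ.comp π) h2 with hg2def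
  have hg1mk : ∀ a, g1 (K1.mkQ a) = K2.mkQ (i a) := fun a => rfl
  have hg2mk : ∀ b, g2 (K2.mkQ b) = K3.mkQ (π b) := fun b => rfl
  have prop1 : g1.comp K1.mkQ = K2.mkQ.comp i := Submodule.liftQ_mkQ _ _ _
  have prop2 : g2.comp K2.mkQ = K3.mkQ.comp π := Submodule.liftQ_mkQ _ _ _
  have hg1inj : Function.Injective g1 := by
    rw [← LinearMap.ker_eq_bot, Submodule.eq_bot_iff]
    intro x hx
    obtain ⟨a, rfl⟩ := Submodule.mkQ_surjective K1 x
    rw [LinearMap.mem_ker, hg1mk, Submodule.mkQ_apply, Submodule.Quotient.mk_eq_zero] at hx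
    obtain ⟨b, hb⟩ := hx
    have hπb : EC (π b) = 0 := by
      rw [← hc2, hb]
      exact hex.apply_apply_eq_zero a
    have hb0 : π b = 0 := hinj (hπb.trans (map_zero EC).symm)
    obtain ⟨a', ha'⟩ := (hex b).mp hb0
    have : i (EA a') = i a := by rw [hc1, ha', hb]
    have haa : EA a' = a := hi this
    rw [Submodule.mkQ_apply, Submodule.Quotient.mk_eq_zero]
    exact ⟨a', haa⟩
  have hex12 : Function.Exact g1 g2 := by
    intro y
    constructor
    · intro h0
      obtain ⟨b, rfl⟩ := Submodule.mkQ_surjective K2 y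
      rw [hg2mk, Submodule.mkQ_apply, Submodule.Quotient.mk_eq_zero] at h0
      obtain ⟨c, hc⟩ := h0
      obtain ⟨b', rfl⟩ := hπ c
      have : π (b - EB b') = 0 := by
        rw [map_sub, hc2, hc, sub_self]
      obtain ⟨a, ha⟩ := (hex _).mp this
      refine ⟨K1.mkQ a, ?_⟩
      rw [hg1mk, Submodule.mkQ_apply, Submodule.mkQ_apply, Submodule.Quotient.eq]
      rw [ha]
      exact ⟨-b', by rw [map_neg]; abel⟩
    · rintro ⟨x, rfl⟩
      obtain ⟨a, rfl⟩ := Submodule.mkQ_surjective K1 x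
      rw [hg1mk, hg2mk, hex.apply_apply_eq_zero, Submodule.mkQ_apply,
        Submodule.Quotient.mk_eq_zero]
      exact Submodule.zero_mem _
  have hg2surj : Function.Surjective g2 := by
    intro z
    obtain ⟨c, rfl⟩ := Submodule.mkQ_surjective K3 z
    obtain ⟨b, rfl⟩ := hπ c
    exact ⟨K2.mkQ b, hg2mk b⟩
  have hkillA : ∀ t : Twist ψ Mtor, r ^ N • t = 0 := by
    refine twist_kill ψ (r ^ N) (fun m => ?_)
    have : ((r ^ N • m : Mtor) : M) = 0 := hN m m.2
    exact Subtype.ext this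
  have hkillC1 : ∀ x : (Twist ψ Mtor ⧸ K1), r ^ N • x = 0 := by
    intro x
    obtain ⟨a, rfl⟩ := Submodule.mkQ_surjective K1 x
    rw [← map_smul, hkillA, map_zero]
  set t1 := LinearMap.codRestrict (pPrim r _) g1
    (fun x => mem_pPrim N (by rw [← map_smul, hkillC1, map_zero])) with ht1def
  set t2 := LinearMap.codRestrict (pPrim r _) (g2.comp (pPrim r _).subtype)
    (fun x => by
      obtain ⟨m, hm⟩ := x.2
      exact mem_pPrim m (by
        rw [LinearMap.comp_apply, ← map_smul]
        show g2 (r ^ m • (x : Twist ψ M ⧸ K2)) = 0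
        rw [hm, map_zero])) with ht2def
  have ht1v : ∀ x, ((t1 x : pPrim r (Twist ψ M ⧸ K2)) : Twist ψ M ⧸ K2) = g1 x :=
    fun x => rfl
  have ht2v : ∀ x, ((t2 x : pPrim r (Twist ψ (M ⧸ Mtor) ⧸ K3)) : Twist ψ (M ⧸ Mtor) ⧸ K3)
      = g2 (x : Twist ψ M ⧸ K2) := fun x => rfl
  refine ⟨g1, g2, prop1, prop2, hg1inj, hex12, hg2surj, t1, t2, ?_, ?_, ?_, ?_, ?_⟩
  · exact LinearMap.subtype_comp_codRestrict _ _ _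
  · exact LinearMap.subtype_comp_codRestrict _ _ _
  · intro x y hxy
    apply hg1inj
    rw [← ht1v, ← ht1v, hxy]
  · intro y
    constructor
    · intro h0
      have hval : g2 (y : Twist ψ M ⧸ K2) = 0 := by
        rw [← ht2v, h0]; rfl
      obtain ⟨x, hx⟩ := (hex12 _).mp hval
      exact ⟨x, Subtype.ext (by rw [ht1v, hx])⟩
    · rintro ⟨x, rfl⟩
      refine Subtype.ext ?_
      rw [ht2v, ht1v]
      show g2 (g1 x) = (0 : Twist ψ (M ⧸ Mtor) ⧸ K3)
      exact (hex12 (g1 x)).mpr ⟨x, rfl⟩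
  · intro z
    obtain ⟨m, hm⟩ := z.2
    obtain ⟨x, hx⟩ := hg2surj (z : Twist ψ (M ⧸ Mtor) ⧸ K3)
    have h1' : g2 (r ^ m • x) = 0 := by
      rw [map_smul, hx]
      exact hm
    obtain ⟨w, hw⟩ := (hex12 _).mp h1'
    have hxmem : x ∈ pPrim r (Twist ψ M ⧸ K2) := by
      refine mem_pPrim (N + m) ?_
      rw [pow_add, mul_smul, ← hw, ← map_smul, hkillC1, map_zero]
    exact ⟨⟨x, hxmem⟩, Subtype.ext (by rw [ht2v]; exact hx)⟩

end Chase

set_option maxHeartbeats 1000000 in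
/-- Let `k` be a perfect field of characteristic `p`, `W = W(k)`,
`𝔖 = W[[u]]` with its Frobenius lift `σ`, `E ∈ W[u]` an Eisenstein polynomial of degree
`e`, `M` a finitely generated `𝔖`-module with torsion submodule `M_tor` killed by a power
of `p`, and `M_tf = M/M_tor`. For every `n ≥ 0` the sequence
`0 → M_tor^{(n)}/E → M^{(n)}/E → M_tf^{(n)}/E → 0` is exact (the maps being the ones
induced by the inclusion and projection after twisting), and, passing to `p`-power
torsion submodules, the sequence
`0 → M_tor^{(n)}/E → (M^{(n)}/E)[p^∞] → (M_tf^{(n)}/E)[p^∞] → 0` is also exact.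
Here `N^{(n)} = Twist (iterateHom σ n) N` with `E` acting via `twistSMul`, and
`N/E` denotes the cokernel of this action. -/
theorem stmt_12 {p : ℕ} [Fact p.Prime] {k : Type*} [Field k] [CharP k p] [PerfectField k]
    (σ : PowerSeries (WittVector p k) →+* PowerSeries (WittVector p k))
    (hσ : ∀ (f : PowerSeries (WittVector p k)) (m : ℕ),
      PowerSeries.coeff m (σ f) =
        if p ∣ m then WittVector.frobenius (PowerSeries.coeff (m / p) f) else 0)
    (E : Polynomial (WittVector p k)) (e : ℕ) (hE : E.Monic) (hdeg : E.natDegree = e)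
    (hco : ∀ i < e, (p : WittVector p k) ∣ E.coeff i)
    (hconst : ∃ v : (WittVector p k)ˣ, E.coeff 0 = (p : WittVector p k) * v)
    (M : Type*) [AddCommGroup M] [Module (PowerSeries (WittVector p k)) M]
    [Module.Finite (PowerSeries (WittVector p k)) M]
    (htor : ∃ N : ℕ, ∀ x ∈ Submodule.torsion (PowerSeries (WittVector p k)) M,
      (p : PowerSeries (WittVector p k)) ^ N • x = 0)
    (n : ℕ) :
    let 𝔖 := PowerSeries (WittVector p k)
    let ψ := iterateHom σ n
    let Mtor := Submodule.torsion 𝔖 M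
    let LE1 := twistSMul ψ (E : 𝔖) Mtor
    let LE2 := twistSMul ψ (E : 𝔖) M
    let LE3 := twistSMul ψ (E : 𝔖) (M ⧸ Mtor)
    let C1 := Twist ψ Mtor ⧸ LinearMap.range LE1
    let C2 := Twist ψ M ⧸ LinearMap.range LE2
    let C3 := Twist ψ (M ⧸ Mtor) ⧸ LinearMap.range LE3
    ∃ (g1 : C1 →ₗ[𝔖] C2) (g2 : C2 →ₗ[𝔖] C3),
      g1.comp (LinearMap.range LE1).mkQ
          = (LinearMap.range LE2).mkQ.comp (twistMap ψ Mtor.subtype) ∧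
      g2.comp (LinearMap.range LE2).mkQ
          = (LinearMap.range LE3).mkQ.comp (twistMap ψ Mtor.mkQ) ∧
      Function.Injective g1 ∧ Function.Exact g1 g2 ∧ Function.Surjective g2 ∧
      ∃ (t1 : C1 →ₗ[𝔖] pPrim (p : 𝔖) C2) (t2 : pPrim (p : 𝔖) C2 →ₗ[𝔖] pPrim (p : 𝔖) C3),
        (pPrim (p : 𝔖) C2).subtype.comp t1 = g1 ∧
        (pPrim (p : 𝔖) C3).subtype.comp t2 = g2.comp (pPrim (p : 𝔖) C2).subtype ∧
        Function.Injective t1 ∧ Function.Exact t1 t2 ∧ Function.Surjective t2 := by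
  intro 𝔖 ψ Mtor LE1 LE2 LE3 C1 C2 C3
  haveI : IsDomain 𝔖 := inferInstanceAs (IsDomain (PowerSeries (WittVector p k)))
  obtain ⟨N, hN⟩ := htor
  haveI : PerfectRing k p := PerfectField.toPerfectRing p
  have hτ : Function.Bijective
      (iterateHom (WittVector.frobenius : WittVector p k →+* WittVector p k) n) :=
    iterateHom_bijective (WittVector.frobenius_bijective p k) n
  have hpq : 0 < p ^ n := pow_pos (Nat.Prime.pos Fact.out) n
  have hflat : Module.Flat 𝔖 (TwBase ψ) :=
    twBase_flat ψ (iterateHom WittVector.frobenius n) (p ^ n) hpq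
      (iterateHom_coeff σ hσ n) hτ
  have hE0 : (E : 𝔖) ≠ 0 := by
    intro h
    exact hE.ne_zero (Polynomial.coe_eq_zero_iff.mp h)
  haveI : NoZeroSMulDivisors 𝔖 (M ⧸ Mtor) :=
    ⟨fun {c x} h => by
      by_cases hc : c = 0
      · exact Or.inl hc
      · exact Or.inr ((smul_eq_zero_iff_right hc).mp h)⟩
  have hinj : Function.Injective LE3 :=
    twistSMul_injective_of_noZeroSMulDivisors ψ (E : 𝔖) hE0 hflat (M ⧸ Mtor)
  exact twist_chase ψ (E : 𝔖) (p : 𝔖) M Mtor hflat hinj N hN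
end

section
/- Let T ⊆ F be finitely generated 𝔖-modules with F free, such that Q = F/T is killed by a power of the ideal (p, u). Then for every n ≥ 0 there is a natural isomorphism Q^{(n)}[E] ≅ (T^{(n)}/E)[p^∞], and Q^{(n)}[E] is entirely p-power torsion. Here N^{(n)} = 𝔖 ⊗_{𝔖,φ^n} N. -/
-- Auxiliary lemmas for stmt_14

noncomputable section Aux

open Function

variable {R : Type*} [CommRing R]

/-- The identity of `R`, bundled as a ring equivalence onto the twisted copy `TwBase ψ`. -/
def toTw (ψ : R →+* R) : R ≃+* TwBase ψ := RingEquiv.refl R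

lemma tw_smul (ψ : R →+* R) (r : R) (x : TwBase ψ) : r • x = toTw ψ (ψ r) * x := rfl

lemma twMulBase_apply (ψ : R →+* R) (a : R) (x : R) :
    twMulBase ψ a (toTw ψ x) = toTw ψ (a * x) := rfl

/-- If `c` kills `M`, it kills any twist of `M`. -/
lemma kill_twist (ψ : R →+* R) {M : Type*} [AddCommGroup M] [Module R M]
    (c : R) (hM : ∀ m : M, c • m = 0) :
    ∀ x : TensorProduct R (TwBase ψ) M, c • x = 0 := by
  intro x
  induction x with
  | zero => simp
  | tmul a m =>
      rw [TensorProduct.smul_tmul', TensorProduct.smul_tmul, hM m, TensorProduct.tmul_zero]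
  | add y z hy hz => rw [smul_add, hy, hz, add_zero]

/-- twistSMul commutes with twistMap, at the level of raw tensor products. -/
lemma comm_twist (ψ : R →+* R) (a : R) {M N : Type*} [AddCommGroup M] [Module R M]
    [AddCommGroup N] [Module R N] (f : M →ₗ[R] N) :
    (TensorProduct.map (twMulBase ψ a) LinearMap.id).comp (LinearMap.lTensor (TwBase ψ) f)
      = (LinearMap.lTensor (TwBase ψ) f).comp
        (TensorProduct.map (twMulBase ψ a) LinearMap.id) := by
  refine TensorProduct.ext' fun x m => ?_
  simp [LinearMap.lTensor_tmul, TensorProduct.map_tmul]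

/-- The abstract diagram chase (snake-style connecting isomorphism). -/
lemma chase {A B C : Type*} [AddCommGroup A] [Module R A] [AddCommGroup B] [Module R B]
    [AddCommGroup C] [Module R C]
    (eA : A →ₗ[R] A) (eB : B →ₗ[R] B) (eC : C →ₗ[R] C)
    (j : A →ₗ[R] B) (π : B →ₗ[R] C)
    (hj : Injective j) (hπ : Surjective π)
    (hex : ∀ y : B, π y = 0 ↔ ∃ a, j a = y)
    (hc1 : ∀ a, eB (j a) = j (eA a)) (hc2 : ∀ y, eC (π y) = π (eB y))
    (hBinj : Injective eB)
    (c : R) (N : ℕ) (hkill : ∀ x : C, c ^ N • x = 0)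
    (hdiv : ∀ (M : ℕ) (z : B), (∃ y, c ^ M • z = eB y) → ∃ y, z = eB y) :
    Nonempty ((LinearMap.ker eC) ≃ₗ[R] (pPrim c (A ⧸ LinearMap.range eA))) := by
  classical
  set L : Submodule R B := LinearMap.ker (eC.comp π) with hL
  have hLmem : ∀ y : B, y ∈ L ↔ eC (π y) = 0 := fun y => Iff.rfl
  -- the map from L onto ker eC
  let u : L →ₗ[R] LinearMap.ker eC :=
    LinearMap.codRestrict _ (π.comp L.subtype) (fun y => by
      simpa [LinearMap.mem_ker] using (hLmem y.1).mp y.2)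
  have hu_val : ∀ y : L, (u y : C) = π y.1 := fun y => rfl
  have hu : Surjective u := by
    intro x
    obtain ⟨y, hy⟩ := hπ x.1
    have hyL : y ∈ L := by
      rw [hLmem, hy]
      exact x.2
    exact ⟨⟨y, hyL⟩, Subtype.ext (by simpa [hu_val] using hy)⟩
  -- the map from L to A/range eA
  let ej : A ≃ₗ[R] LinearMap.range j := LinearEquiv.ofInjective j hj
  have hej : ∀ a, (ej a : B) = j a := fun a => rfl
  let w : L →ₗ[R] LinearMap.range j :=
    LinearMap.codRestrict _ (eB.comp L.subtype) (fun y => by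
      obtain ⟨a, ha⟩ := (hex (eB y.1)).mp (by
        rw [← hc2]
        exact (hLmem y.1).mp y.2)
      exact ⟨a, ha⟩)
  have hw_val : ∀ y : L, (w y : B) = eB y.1 := fun y => rfl
  have hws : ∀ z : LinearMap.range j, j (ej.symm z) = (z : B) := fun z =>
    (hej (ej.symm z)).symm.trans (congrArg Subtype.val (ej.apply_symm_apply z))
  have hkey : ∀ (y : L) (t : A), j t = eB y.1 → ej.symm (w y) = t := by
    intro y t ht
    apply hj
    rw [hws, hw_val, ht]
  let v : A ⧸ LinearMap.range eA →ₗ[R] A ⧸ LinearMap.range eA := LinearMap.id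
  let v' : L →ₗ[R] A ⧸ LinearMap.range eA :=
    (LinearMap.range eA).mkQ.comp (ej.symm.toLinearMap.comp w)
  have hv' : ∀ y : L, v' y = Submodule.Quotient.mk (ej.symm (w y)) := fun y => rfl
  have hker : LinearMap.ker u ≤ LinearMap.ker v' := by
    intro y hy
    have hπy : π y.1 = 0 := by
      have := congrArg Subtype.val (LinearMap.mem_ker.mp hy)
      simpa [hu_val] using this
    obtain ⟨s, hs⟩ := (hex y.1).mp hπy
    have h1 : j (eA s) = eB y.1 := by rw [← hc1, hs]
    have h2 := hkey y (eA s) h1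
    rw [LinearMap.mem_ker, hv', h2]
    rw [Submodule.Quotient.mk_eq_zero]
    exact ⟨s, rfl⟩
  let δ₀ : (L ⧸ LinearMap.ker u) →ₗ[R] A ⧸ LinearMap.range eA :=
    Submodule.liftQ _ v' hker
  let iso1 : (L ⧸ LinearMap.ker u) ≃ₗ[R] LinearMap.ker eC :=
    u.quotKerEquivOfSurjective hu
  let δ : LinearMap.ker eC →ₗ[R] A ⧸ LinearMap.range eA :=
    δ₀.comp (iso1.symm : LinearMap.ker eC →ₗ[R] L ⧸ LinearMap.ker u)
  have hδ : ∀ y : L, δ (u y) = v' y := by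
    intro y
    have h1 : iso1 (Submodule.Quotient.mk y) = u y := rfl
    show δ₀ (iso1.symm (u y)) = v' y
    rw [← h1, LinearEquiv.symm_apply_apply]
    exact Submodule.liftQ_apply _ _ _
  have hinj : Injective δ := by
    rw [← LinearMap.ker_eq_bot]
    rw [eq_bot_iff]
    intro x hx
    obtain ⟨y, rfl⟩ := hu x
    have hv0 : v' y = 0 := by rw [← hδ y]; exact LinearMap.mem_ker.mp hx
    rw [hv', Submodule.Quotient.mk_eq_zero] at hv0
    obtain ⟨s, hs⟩ := hv0
    have hjw : j (ej.symm (w y)) = eB y.1 := by rw [hws, hw_val]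
    rw [← hs, ← hc1] at hjw
    have hy1 : j s = y.1 := hBinj hjw
    have : u y = 0 := by
      apply Subtype.ext
      rw [hu_val]
      show π y.1 = 0
      rw [← hy1]
      exact (hex (j s)).mpr ⟨s, rfl⟩
    simp [this]
  have hrange : LinearMap.range δ = pPrim c (A ⧸ LinearMap.range eA) := by
    apply le_antisymm
    · rintro q ⟨x, rfl⟩
      obtain ⟨y, rfl⟩ := hu x
      rw [hδ y, hv']
      refine ⟨N, ?_⟩
      set t := ej.symm (w y) with htdef
      have hjt : j t = eB y.1 := by rw [htdef, hws, hw_val]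
      have h0 : π (c ^ N • y.1) = 0 := by rw [map_smul]; exact hkill (π y.1)
      obtain ⟨s, hs⟩ := (hex _).mp h0
      have h1 : j (eA s) = j (c ^ N • t) := by
        rw [← hc1, hs, map_smul, map_smul, hjt]
      have h2 : eA s = c ^ N • t := hj h1
      rw [← Submodule.mkQ_apply, ← map_smul, ← h2, Submodule.mkQ_apply,
        Submodule.Quotient.mk_eq_zero]
      exact ⟨s, rfl⟩
    · intro q hq
      obtain ⟨t, rfl⟩ := Submodule.mkQ_surjective _ q
      obtain ⟨M, hM⟩ := hq
      have hM' : c ^ M • t ∈ LinearMap.range eA := by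
        rw [← Submodule.Quotient.mk_eq_zero, ← Submodule.mkQ_apply, map_smul]
        exact hM
      obtain ⟨s, hs⟩ := hM'
      have h1 : c ^ M • (j t) = eB (j s) := by
        rw [hc1, hs, map_smul]
      obtain ⟨y, hy⟩ := hdiv M (j t) ⟨j s, h1⟩
      have hyL : y ∈ L := by
        rw [hLmem, hc2, ← hy]
        exact (hex (j t)).mpr ⟨t, rfl⟩
      refine ⟨u ⟨y, hyL⟩, ?_⟩
      rw [hδ, hv', hkey ⟨y, hyL⟩ t hy]
      rfl
  exact ⟨(LinearEquiv.ofInjective δ hinj).trans (LinearEquiv.ofEq _ _ hrange)⟩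

end Aux

noncomputable section WittAux

open PowerSeries

variable {p : ℕ} [Fact p.Prime] {k : Type*} [Field k] [CharP k p]

lemma pW_prime [PerfectField k] : Prime (p : WittVector p k) := by
  haveI : IsDiscreteValuationRing (WittVector p k) := WittVector.isDiscreteValuationRing
  exact (WittVector.irreducible p).prime

lemma pW_ne : (p : WittVector p k) ≠ 0 :=
  (WittVector.irreducible p (k := k)).ne_zero

lemma pS_eq : (p : PowerSeries (WittVector p k)) = C (p : WittVector p k) := by
  rw [map_natCast]

lemma pS_ne : (p : PowerSeries (WittVector p k)) ≠ 0 := by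
  intro h
  apply pW_ne (p := p) (k := k)
  have := congrArg (PowerSeries.constantCoeff) h
  rw [pS_eq] at this
  simpa using this

lemma C_dvd_of_coeffs {c : WittVector p k} {f : PowerSeries (WittVector p k)}
    (h : ∀ m, c ∣ coeff m f) : (C c) ∣ f := by
  classical
  refine ⟨PowerSeries.mk (fun m => (h m).choose), ?_⟩
  refine PowerSeries.ext fun m => ?_
  rw [coeff_C_mul, coeff_mk]
  exact (h m).choose_spec

variable [PerfectField k] {E : Polynomial (WittVector p k)} {e : ℕ}
  (hE : E.Monic) (hdeg : E.natDegree = e)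
  (hco : ∀ i < e, (p : WittVector p k) ∣ E.coeff i)

include hE hdeg hco in
lemma pdvd_step {g h : PowerSeries (WittVector p k)}
    (heq : (p : PowerSeries (WittVector p k)) * g = (E : PowerSeries (WittVector p k)) * h) :
    (p : PowerSeries (WittVector p k)) ∣ h := by
  classical
  rw [pS_eq]
  apply C_dvd_of_coeffs
  intro m
  have h1 : (p : WittVector p k) ∣ coeff (e + m) ((E : PowerSeries (WittVector p k)) * h) := by
    rw [← heq, pS_eq, coeff_C_mul]
    exact Dvd.intro _ rfl
  rw [coeff_mul] at h1
  have hmem : (e, m) ∈ Finset.HasAntidiagonal.antidiagonal (e + m) := Finset.HasAntidiagonal.mem_antidiagonal.mpr rfl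
  rw [← Finset.add_sum_erase _ _ hmem] at h1
  have h2 : (p : WittVector p k) ∣
      ∑ x ∈ (Finset.HasAntidiagonal.antidiagonal (e + m)).erase (e, m),
        coeff x.1 (E : PowerSeries (WittVector p k)) * coeff x.2 h := by
    apply Finset.dvd_sum
    intro x hx
    obtain ⟨hne, hxmem⟩ := Finset.mem_erase.mp hx
    have hsum : x.1 + x.2 = e + m := Finset.HasAntidiagonal.mem_antidiagonal.mp hxmem
    rcases lt_trichotomy x.1 e with hlt | heqq | hgt
    · exact dvd_mul_of_dvd_left (by rw [Polynomial.coeff_coe]; exact hco x.1 hlt) _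
    · exact absurd (Prod.ext heqq (by omega)) hne
    · have : coeff x.1 (E : PowerSeries (WittVector p k)) = 0 := by
        rw [Polynomial.coeff_coe]
        exact Polynomial.coeff_eq_zero_of_natDegree_lt (by omega)
      simp [this]
      -- fix

  have h3 := (dvd_add_right h2).mp (by rwa [add_comm] at h1)
  have h4 : coeff e (E : PowerSeries (WittVector p k)) = 1 := by
    rw [Polynomial.coeff_coe, ← hdeg]
    exact hE.coeff_natDegree
  rwa [h4, one_mul] at h3

include hE hdeg hco in
lemma Edvd : ∀ (M : ℕ) (f : PowerSeries (WittVector p k)),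
    (E : PowerSeries (WittVector p k)) ∣ (p : PowerSeries (WittVector p k)) ^ M * f →
      (E : PowerSeries (WittVector p k)) ∣ f := by
  intro M
  induction M with
  | zero => intro f hf; simpa using hf
  | succ M ih =>
      intro f hf
      obtain ⟨h, hh⟩ := hf
      have hh' : (p : PowerSeries (WittVector p k)) *
          ((p : PowerSeries (WittVector p k)) ^ M * f) = (E : PowerSeries _) * h := by
        rw [← hh]; ring
      obtain ⟨h', rfl⟩ := pdvd_step hE hdeg hco hh'
      apply ih
      have : (p : PowerSeries (WittVector p k)) *
          ((p : PowerSeries (WittVector p k)) ^ M * f) =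
          (p : PowerSeries (WittVector p k)) * ((E : PowerSeries _) * h') := by
        rw [hh']; ring
      exact ⟨h', mul_left_cancel₀ pS_ne this⟩

end WittAux

noncomputable section FrobAux

open PowerSeries

variable {p : ℕ} [Fact p.Prime] {k : Type*} [Field k] [CharP k p] [PerfectField k]
variable (σ : PowerSeries (WittVector p k) →+* PowerSeries (WittVector p k))
variable (hσ : ∀ (f : PowerSeries (WittVector p k)) (m : ℕ),
      PowerSeries.coeff m (σ f) =
        if p ∣ m then WittVector.frobenius (PowerSeries.coeff (m / p) f) else 0)

local notation "W" => WittVector p k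
local notation "𝔖" => PowerSeries (WittVector p k)

include hσ in
lemma coeff_iterateHom (n : ℕ) (f : 𝔖) (m : ℕ) :
    coeff m (iterateHom σ n f) =
      if p ^ n ∣ m then
        (⇑(WittVector.frobeniusEquiv p k))^[n] (coeff (m / p ^ n) f) else 0 := by
  induction n generalizing m with
  | zero => simp [iterateHom]
  | succ n ih =>
      show coeff m (σ (iterateHom σ n f)) = _
      rw [hσ, ih]
      by_cases h1 : p ∣ m
      · have h2 : p ^ n ∣ m / p ↔ p ^ (n + 1) ∣ m := by
          rw [Nat.dvd_div_iff_mul_dvd h1, pow_succ']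
        by_cases h3 : p ^ (n + 1) ∣ m
        · rw [if_pos h1, if_pos (h2.mpr h3), if_pos h3]
          have h4 : m / p / p ^ n = m / p ^ (n + 1) := by
            rw [Nat.div_div_eq_div_mul, ← pow_succ']
          rw [h4, Function.iterate_succ_apply']
          rfl
        · rw [if_pos h1, if_neg (fun hc => h3 (h2.mp hc)), if_neg h3, map_zero]
      · have h3 : ¬ p ^ (n + 1) ∣ m :=
          fun hd => h1 (dvd_trans (dvd_pow_self p (Nat.succ_ne_zero n)) hd)
        rw [if_neg h1, if_neg h3]

variable (n : ℕ)

/-- Reassembly map: from `p^n` components to a power series via `σ^n`. -/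
def smapF : (Fin (p ^ n) → 𝔖) → 𝔖 :=
  fun g => ∑ i : Fin (p ^ n), iterateHom σ n (g i) * (X : 𝔖) ^ (i : ℕ)

/-- Decomposition map: extract the `p^n` components of a power series. -/
def gmapF : 𝔖 → (Fin (p ^ n) → 𝔖) := fun f i =>
  PowerSeries.mk fun j =>
    (⇑(WittVector.frobeniusEquiv p k).symm)^[n] (coeff (p ^ n * j + (i : ℕ)) f)

lemma coeff_gmapF (f : 𝔖) (i : Fin (p ^ n)) (j : ℕ) :
    coeff j (gmapF n f i) =
      (⇑(WittVector.frobeniusEquiv p k).symm)^[n] (coeff (p ^ n * j + (i : ℕ)) f) := by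
  rw [gmapF, coeff_mk]

include hσ in
lemma coeff_smapF (g : Fin (p ^ n) → 𝔖) (m : ℕ) (i₀ : Fin (p ^ n))
    (hi₀ : (i₀ : ℕ) = m % p ^ n) :
    coeff m (smapF σ n g) =
      (⇑(WittVector.frobeniusEquiv p k))^[n] (coeff (m / p ^ n) (g i₀)) := by
  classical
  have hP : 0 < p ^ n := pow_pos (Fact.out : p.Prime).pos n
  rw [smapF, map_sum, Finset.sum_eq_single i₀]
  · have hle : (i₀ : ℕ) ≤ m := by rw [hi₀]; exact Nat.mod_le m _
    have hdvd : p ^ n ∣ m - (i₀ : ℕ) := by rw [hi₀]; exact Nat.dvd_sub_mod m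
    rw [coeff_mul_X_pow', if_pos hle, coeff_iterateHom σ hσ, if_pos hdvd]
    congr 2
    have h5 : m - (i₀ : ℕ) = p ^ n * (m / p ^ n) := by
      have := Nat.div_add_mod m (p ^ n); omega
    rw [h5, Nat.mul_div_cancel_left _ hP]
  · intro i _ hne
    rw [coeff_mul_X_pow']
    by_cases hi : (i : ℕ) ≤ m
    · rw [if_pos hi, coeff_iterateHom σ hσ, if_neg]
      intro hdvd
      obtain ⟨q, hq⟩ := hdvd
      apply hne
      apply Fin.ext
      have hm : m = p ^ n * q + (i : ℕ) := by omega
      rw [hi₀, hm, Nat.mul_add_mod]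
      exact (Nat.mod_eq_of_lt i.isLt).symm
    · rw [if_neg hi]
  · intro hmem; exact absurd (Finset.mem_univ _) hmem

include hσ in
lemma smapF_gmapF (f : 𝔖) : smapF σ n (gmapF n f) = f := by
  have hP : 0 < p ^ n := pow_pos (Fact.out : p.Prime).pos n
  refine PowerSeries.ext fun m => ?_
  rw [coeff_smapF σ hσ n _ m ⟨m % p ^ n, Nat.mod_lt m hP⟩ rfl, coeff_gmapF]
  have hri : ∀ x : W, (⇑(WittVector.frobeniusEquiv p k))^[n]
      ((⇑(WittVector.frobeniusEquiv p k).symm)^[n] x) = x :=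
    fun x => Function.LeftInverse.iterate (WittVector.frobeniusEquiv p k).apply_symm_apply n x
  have h6 : p ^ n * (m / p ^ n) +
      ((⟨m % p ^ n, Nat.mod_lt m hP⟩ : Fin (p ^ n)) : ℕ) = m :=
    Nat.div_add_mod m (p ^ n)
  rw [h6, hri]

include hσ in
lemma gmapF_smapF (g : Fin (p ^ n) → 𝔖) : gmapF n (smapF σ n g) = g := by
  have hP : 0 < p ^ n := pow_pos (Fact.out : p.Prime).pos n
  funext i
  refine PowerSeries.ext fun j => ?_
  have h1 : (i : ℕ) = (p ^ n * j + (i : ℕ)) % p ^ n := by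
    rw [Nat.mul_add_mod, Nat.mod_eq_of_lt i.isLt]
  rw [coeff_gmapF, coeff_smapF σ hσ n g _ i h1]
  have h2 : (p ^ n * j + (i : ℕ)) / p ^ n = j := by
    rw [add_comm, Nat.add_mul_div_left _ _ hP, Nat.div_eq_of_lt i.isLt, zero_add]
  rw [h2]
  exact Function.LeftInverse.iterate (WittVector.frobeniusEquiv p k).symm_apply_apply n _

lemma smapF_add (g h : Fin (p ^ n) → 𝔖) :
    smapF σ n (g + h) = smapF σ n g + smapF σ n h := by
  unfold smapF
  rw [← Finset.sum_add_distrib]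
  refine Finset.sum_congr rfl fun i _ => ?_
  rw [Pi.add_apply, map_add, add_mul]

lemma smapF_smul (r : 𝔖) (g : Fin (p ^ n) → 𝔖) :
    smapF σ n (r • g) = iterateHom σ n r * smapF σ n g := by
  unfold smapF
  rw [Finset.mul_sum]
  refine Finset.sum_congr rfl fun i _ => ?_
  rw [Pi.smul_apply, smul_eq_mul, map_mul, mul_assoc]

include hσ in
lemma twBase_free : Module.Free 𝔖 (TwBase (iterateHom σ n)) := by
  refine Module.Free.of_equiv' (Module.Free.of_basis (Pi.basisFun 𝔖 (Fin (p ^ n))))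
    (?_ : (Fin (p ^ n) → 𝔖) ≃ₗ[𝔖] TwBase (iterateHom σ n))
  refine
    { toFun := fun g => toTw (iterateHom σ n) (smapF σ n g)
      invFun := fun x => gmapF n ((toTw (iterateHom σ n)).symm x)
      left_inv := fun g => by
        show gmapF n ((toTw (iterateHom σ n)).symm
          (toTw (iterateHom σ n) (smapF σ n g))) = g
        rw [RingEquiv.symm_apply_apply, gmapF_smapF σ hσ]
      right_inv := fun x => by
        show toTw (iterateHom σ n)
          (smapF σ n (gmapF n ((toTw (iterateHom σ n)).symm x))) = x
        rw [smapF_gmapF σ hσ, RingEquiv.apply_symm_apply]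
      map_add' := fun g h => by
        rw [← map_add]
        congr 1
        exact smapF_add σ n g h
      map_smul' := fun r g => by
        show toTw (iterateHom σ n) (smapF σ n (r • g)) =
          r • toTw (iterateHom σ n) (smapF σ n g)
        rw [tw_smul, ← map_mul]
        congr 1
        exact smapF_smul σ n r g }

end FrobAux

noncomputable section DivAux

variable {R : Type*} [CommRing R]

set_option synthInstance.maxHeartbeats 1000000 in
/-- Generic division lemma for the twisted multiplication map on a finite free module. -/
lemma divLemma₀ (ψ : R →+* R) (c Ec : R) (hc : ψ c = c) {ι : Type*} [Fintype ι]
    (hdvd : ∀ (M : ℕ) (f : R), Ec ∣ c ^ M * f → Ec ∣ f) :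
    ∀ (M : ℕ) (z y : TensorProduct R (TwBase ψ) (ι → R)),
      c ^ M • z = TensorProduct.map (twMulBase ψ Ec) LinearMap.id y →
      ∃ y', z = TensorProduct.map (twMulBase ψ Ec) LinearMap.id y' := by
  classical
  set Θ : TensorProduct R (TwBase ψ) (ι → R) ≃ₗ[R] (ι → TwBase ψ) :=
    (TensorProduct.piRight R R (TwBase ψ) (fun _ : ι => R)).trans
      (LinearEquiv.piCongrRight (fun _ => TensorProduct.rid R (TwBase ψ))) with hΘdef
  have hΘ : ∀ (z : TensorProduct R (TwBase ψ) (ι → R)) (i : ι),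
      Θ (TensorProduct.map (twMulBase ψ Ec) LinearMap.id z) i
        = twMulBase ψ Ec (Θ z i) := by
    intro z
    induction z with
    | zero => intro i; simp
    | tmul a f =>
        intro i
        rw [TensorProduct.map_tmul]
        rw [hΘdef]
        simp only [LinearEquiv.trans_apply, TensorProduct.piRight_apply,
          TensorProduct.piRightHom_tmul, LinearEquiv.piCongrRight_apply,
          TensorProduct.rid_tmul, LinearMap.id_coe, id_eq]
        exact ((twMulBase ψ Ec).map_smul (f i) a).symm
    | add z₁ z₂ h₁ h₂ =>
        intro i
        rw [map_add, map_add, map_add, Pi.add_apply, Pi.add_apply, h₁, h₂, map_add]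
  intro M z y hy
  have h1 : ∀ i, c ^ M • (Θ z i) = twMulBase ψ Ec (Θ y i) := by
    intro i
    have h0 := congrFun (congrArg (⇑Θ) hy) i
    rw [map_smul, Pi.smul_apply] at h0
    rw [h0, hΘ]
  have h2 : ∀ i, ∃ w : R, (toTw ψ).symm (Θ z i) = Ec * w := by
    intro i
    have h3 : c ^ M * ((toTw ψ).symm (Θ z i)) = Ec * ((toTw ψ).symm (Θ y i)) := by
      have h4 := congrArg (toTw ψ).symm (h1 i)
      rw [tw_smul] at h4
      rw [map_mul, RingEquiv.symm_apply_apply] at h4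
      rw [map_pow, hc] at h4
      exact h4
    exact hdvd M _ ⟨_, h3⟩
  choose wv hwv using h2
  refine ⟨Θ.symm (fun i => toTw ψ (wv i)), ?_⟩
  apply Θ.injective
  funext i
  rw [hΘ, LinearEquiv.apply_symm_apply]
  show Θ z i = twMulBase ψ Ec (toTw ψ (wv i))
  rw [twMulBase_apply, ← hwv i, RingEquiv.apply_symm_apply]

end DivAux

/-- Let `k` be a perfect field of characteristic `p`, `W = W(k)`,
`𝔖 = W[[u]]` with its Frobenius lift `σ`, `E ∈ W[u]` an Eisenstein polynomial of degree
`e`. Let `T ⊆ F` be finitely generated `𝔖`-modules with `F` free, such that `Q = F/T` is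
killed by a power of the ideal `(p, u)`. Then for every `n ≥ 0` there is an isomorphism
`Q^{(n)}[E] ≅ (T^{(n)}/E)[p^∞]`, and `Q^{(n)}[E]` is entirely `p`-power torsion.
Here `N^{(n)} = 𝔖 ⊗_{𝔖,σ^n} N` (the module `Twist`, with `E` acting via `twistSMul`). -/
theorem stmt_14 {p : ℕ} [Fact p.Prime] {k : Type*} [Field k] [CharP k p] [PerfectField k]
    (σ : PowerSeries (WittVector p k) →+* PowerSeries (WittVector p k))
    (hσ : ∀ (f : PowerSeries (WittVector p k)) (m : ℕ),
      PowerSeries.coeff m (σ f) =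
        if p ∣ m then WittVector.frobenius (PowerSeries.coeff (m / p) f) else 0)
    (E : Polynomial (WittVector p k)) (e : ℕ) (hE : E.Monic) (hdeg : E.natDegree = e)
    (hco : ∀ i < e, (p : WittVector p k) ∣ E.coeff i)
    (hconst : ∃ v : (WittVector p k)ˣ, E.coeff 0 = (p : WittVector p k) * v)
    (b : ℕ)
    (T : Submodule (PowerSeries (WittVector p k)) (Fin b → PowerSeries (WittVector p k)))
    (hT : T.FG)
    (hQ : ∃ N : ℕ,
      ∀ x ∈ (Ideal.span {(p : PowerSeries (WittVector p k)),
          (PowerSeries.X : PowerSeries (WittVector p k))}) ^ N,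
        ∀ q : (Fin b → PowerSeries (WittVector p k)) ⧸ T, x • q = 0)
    (n : ℕ) :
    let 𝔖 := PowerSeries (WittVector p k)
    let ψ := iterateHom σ n
    let Q := (Fin b → 𝔖) ⧸ T
    (∀ x ∈ LinearMap.ker (twistSMul ψ (E : 𝔖) Q), ∃ N : ℕ, (p : 𝔖) ^ N • x = 0) ∧
      Nonempty ((LinearMap.ker (twistSMul ψ (E : 𝔖) Q)) ≃ₗ[𝔖]
        (pPrim (p : 𝔖) (Twist ψ T ⧸ LinearMap.range (twistSMul ψ (E : 𝔖) T)))) := by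
  intro 𝔖 ψ Q
  classical
  obtain ⟨N, hN⟩ := hQ
  have hkq : ∀ q : Q, (p : 𝔖) ^ N • q = 0 := fun q =>
    hN _ (Ideal.pow_mem_pow (Ideal.subset_span (Set.mem_insert _ _)) N) q
  have hkill := kill_twist ψ ((p : 𝔖) ^ N) hkq
  constructor
  · exact fun x _ => ⟨N, hkill x⟩
  · -- flatness instances
    haveI hfree : Module.Free 𝔖 (TwBase ψ) := twBase_free σ hσ n
    haveI hflat : Module.Flat 𝔖 (TwBase ψ) := Module.Flat.of_free
    haveI hfreeF : Module.Free 𝔖 (Fin b → 𝔖) := Module.Free.of_basis (Pi.basisFun _ _)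
    haveI hflatF : Module.Flat 𝔖 (Fin b → 𝔖) := Module.Flat.of_free
    have hj : Function.Injective (twistMap ψ T.subtype) :=
      Module.Flat.lTensor_preserves_injective_linearMap (M := TwBase ψ)
        T.subtype T.injective_subtype
    have hπ : Function.Surjective ⇑(twistMap ψ T.mkQ) :=
      LinearMap.lTensor_surjective (TwBase ψ) (Submodule.mkQ_surjective T)
    have hex : ∀ y : Twist ψ (Fin b → 𝔖),
        twistMap ψ T.mkQ y = 0 ↔ ∃ a, twistMap ψ T.subtype a = y :=
      fun y => lTensor_exact (TwBase ψ) (LinearMap.exact_subtype_mkQ T)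
        (Submodule.mkQ_surjective T) y
    have hc1 : ∀ a : Twist ψ ↥T,
        twistSMul ψ (E : 𝔖) (Fin b → 𝔖) (twistMap ψ T.subtype a)
          = twistMap ψ T.subtype (twistSMul ψ (E : 𝔖) ↥T a) :=
      fun a => LinearMap.congr_fun (comm_twist ψ (E : 𝔖) T.subtype) a
    have hc2 : ∀ y : Twist ψ (Fin b → 𝔖),
        twistSMul ψ (E : 𝔖) Q (twistMap ψ T.mkQ y)
          = twistMap ψ T.mkQ (twistSMul ψ (E : 𝔖) (Fin b → 𝔖) y) :=
      fun y => LinearMap.congr_fun (comm_twist ψ (E : 𝔖) T.mkQ) y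
    have hE0 : (E : 𝔖) ≠ 0 := by
      rw [Ne, Polynomial.coe_eq_zero_iff]
      exact hE.ne_zero
    have hcancel : ∀ x y : 𝔖, (E : 𝔖) * x = (E : 𝔖) * y → x = y :=
      fun x y h => mul_left_cancel₀ hE0 h
    have hBinj : Function.Injective (twistSMul ψ (E : 𝔖) (Fin b → 𝔖)) :=
      Module.Flat.rTensor_preserves_injective_linearMap (twMulBase ψ (E : 𝔖))
        (fun x y h => hcancel x y h)
    have hdiv : ∀ (M : ℕ) (z : Twist ψ (Fin b → 𝔖)),
        (∃ y, (p : 𝔖) ^ M • z = twistSMul ψ (E : 𝔖) (Fin b → 𝔖) y) →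
        ∃ y, z = twistSMul ψ (E : 𝔖) (Fin b → 𝔖) y := by
      intro M z hz
      obtain ⟨y, hy⟩ := hz
      exact divLemma₀ ψ (p : 𝔖) (E : 𝔖) (map_natCast ψ p) (ι := Fin b)
        (Edvd hE hdeg hco) M z y hy
    exact chase (twistSMul ψ (E : 𝔖) ↥T) (twistSMul ψ (E : 𝔖) (Fin b → 𝔖))
      (twistSMul ψ (E : 𝔖) Q) (twistMap ψ T.subtype) (twistMap ψ T.mkQ)
      hj hπ hex hc1 hc2 hBinj (p : 𝔖) N hkill hdiv
end
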